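/- If Xₙ₊₁ = RₙXₙ with i.i.d. random matrices Rₙ and S = E[Rₙ⊗Rₙ] has spectral radius ρ(S) < 1, then E|Xₙ|² → 0 as n → ∞ for any square-integrable initial value X₀ independent of the (Rₙ). -/

import Mathlib

open MeasureTheory ProbabilityTheory Filter

attribute [local instance] Matrix.linftyOpNormedRing Matrix.linftyOpNormedAlgebra

/-- If all complex eigenvalues of a real matrix lie strictly inside the unit disc,
then the entries of its powers tend to zero. -/
lemma aux_entry_tendsto_zero {m : Type*} [Fintype m] [DecidableEq m]
    (S : Matrix m m ℝ)
    (hρ : ∀ μ ∈ spectrum ℂ (S.map (Complex.ofReal ·)), ‖μ‖ < 1) (p q : m) :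
    Tendsto (fun n => (S ^ n) p q) atTop (nhds 0) := by
  haveI : Nonempty m := ⟨p⟩
  haveI : CompleteSpace (Matrix m m ℂ) := FiniteDimensional.complete ℂ _
  haveI : Nontrivial (Matrix m m ℂ) := by
    refine ⟨1, 0, fun h => ?_⟩
    have := congrFun (congrFun h p) p
    simp [Matrix.one_apply] at this
  set a : Matrix m m ℂ := S.map (Complex.ofReal ·) with ha
  have hρ' : spectralRadius ℂ a < 1 := by
    have h := spectrum.spectralRadius_lt_of_forall_lt a (r := 1) ?_
    · simpa using h
    · intro z hz
      have h1 : ‖z‖ < 1 := hρ z hz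
      have h2 : ‖z‖ < 1 := h1
      exact_mod_cast h2
  obtain ⟨r, hr1, hr2⟩ := ENNReal.lt_iff_exists_nnreal_btwn.mp hρ'
  have hr2' : r < 1 := by exact_mod_cast hr2
  have hg := spectrum.pow_nnnorm_pow_one_div_tendsto_nhds_spectralRadius a
  have hev : ∀ᶠ n : ℕ in atTop, (‖a ^ n‖₊ : ENNReal) ^ (1 / (n : ℝ)) < r :=
    hg.eventually_lt_const hr1
  have hbound : ∀ᶠ n : ℕ in atTop, ‖a ^ n‖ ≤ (r : ℝ) ^ n := by
    filter_upwards [hev, eventually_ge_atTop 1] with n hn hn1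
    have hn0 : (n : ℝ) ≠ 0 := Nat.cast_ne_zero.mpr (by omega)
    have h1 : ((‖a ^ n‖₊ : ENNReal) ^ (1 / (n : ℝ))) ^ (n : ℝ) ≤ (r : ENNReal) ^ (n : ℝ) :=
      ENNReal.rpow_le_rpow hn.le (Nat.cast_nonneg n)
    rw [← ENNReal.rpow_mul, one_div, inv_mul_cancel₀ hn0, ENNReal.rpow_one,
      ENNReal.rpow_natCast] at h1
    have h2 : ‖a ^ n‖₊ ≤ r ^ n := by exact_mod_cast h1
    calc ‖a ^ n‖ = ((‖a ^ n‖₊ : ℝ)) := (coe_nnnorm _).symm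
      _ ≤ ((r ^ n : NNReal) : ℝ) := by exact_mod_cast h2
      _ = (r : ℝ) ^ n := by push_cast; ring
  have hnorm0 : Tendsto (fun n => ‖a ^ n‖) atTop (nhds 0) := by
    refine squeeze_zero' (Eventually.of_forall fun n => norm_nonneg _) hbound ?_
    exact tendsto_pow_atTop_nhds_zero_of_lt_one r.coe_nonneg (by exact_mod_cast hr2')
  have hentry : ∀ n, |(S ^ n) p q| ≤ ‖a ^ n‖ := by
    intro n
    have hpow : a ^ n = (S ^ n).map (Complex.ofReal ·) := by
      have h0 : a = Complex.ofRealHom.mapMatrix S := rfl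
      have h1 : (S ^ n).map (Complex.ofReal ·) = Complex.ofRealHom.mapMatrix (S ^ n) := rfl
      rw [h0, h1, ← map_pow]
    have h1 : ‖(a ^ n) p q‖₊ ≤ ‖a ^ n‖₊ := by
      rw [Matrix.linfty_opNNNorm_def]
      exact le_trans
        (Finset.single_le_sum (f := fun j => ‖(a ^ n) p j‖₊) (fun j _ => zero_le)
          (Finset.mem_univ q))
        (Finset.le_sup (f := fun i => ∑ j, ‖(a ^ n) i j‖₊) (Finset.mem_univ p))
    have h1' : ‖(a ^ n) p q‖ ≤ ‖a ^ n‖ := h1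
    have habs : |(S ^ n) p q| = ‖(a ^ n) p q‖ := by
      rw [hpow]
      simp [Matrix.map_apply, Complex.norm_real]
    rw [habs]
    exact h1'
  refine squeeze_zero_norm (fun n => ?_) hnorm0
  rw [Real.norm_eq_abs]
  exact hentry n

instance matrixMeasurableSpace {d : ℕ} : MeasurableSpace (Matrix (Fin d) (Fin d) ℝ) :=
  show MeasurableSpace (Fin d → Fin d → ℝ) from inferInstance

/-- If `Xₙ₊₁ = RₙXₙ` with i.i.d. random matrices `Rₙ` and
`S = E[Rₙ⊗Rₙ]` has spectral radius `ρ(S) < 1`, then `E|Xₙ|² → 0` as `n → ∞`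
for any square-integrable initial value `X₀` independent of the `Rₙ`. -/
theorem ms_stability_of_spectral_radius_lt_one {d : ℕ} {Ω : Type*}
    [MeasurableSpace Ω] (P : Measure Ω) [IsProbabilityMeasure P]
    (R : ℕ → Ω → Matrix (Fin d) (Fin d) ℝ) (X : ℕ → Ω → (Fin d → ℝ))
    (S : Matrix (Fin d × Fin d) (Fin d × Fin d) ℝ)
    (hRmeas : ∀ n, Measurable (R n)) (hXmeas : ∀ n, Measurable (X n))
    (hRL2 : ∀ n i j, MemLp (fun ω => R n ω i j) 2 P)
    (hXL2 : ∀ i, MemLp (fun ω => X 0 ω i) 2 P)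
    (hiid : ∀ n, P.map (R n) = P.map (R 0))
    (hindep : ∀ n, IndepFun (R n) (X n) P)
    (hrec : ∀ n ω, X (n + 1) ω = (R n ω).mulVec (X n ω))
    (hS : ∀ n, ∀ p q : Fin d × Fin d,
      (∫ ω, R n ω p.1 q.1 * R n ω p.2 q.2 ∂P) = S p q)
    (hρ : ∀ μ ∈ spectrum ℂ (S.map (Complex.ofReal ·)), ‖μ‖ < 1) :
    Tendsto (fun n => ∫ ω, ∑ i, (X n ω i) ^ 2 ∂P) atTop (nhds 0) := by
  classical
  have measX : ∀ n (i : Fin d), Measurable fun ω => X n ω i :=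
    fun n i => (measurable_pi_apply i).comp (hXmeas n)
  have measE : ∀ i j : Fin d, Measurable fun M : Matrix (Fin d) (Fin d) ℝ => M i j :=
    fun i j => (measurable_pi_apply j).comp (measurable_pi_apply i)
  have measR : ∀ n (i j : Fin d), Measurable fun ω => R n ω i j :=
    fun n i j => (measE i j).comp (hRmeas n)
  -- product of two L² functions is integrable
  have hmul : ∀ {f g : Ω → ℝ}, MemLp f 2 P → MemLp g 2 P →
      Integrable (fun ω => f ω * g ω) P := by
    intro f g hf hg
    have hpqr : (1 : ENNReal) / 1 = 1 / 2 + 1 / 2 := by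
      rw [ENNReal.div_add_div_same, one_add_one_eq_two,
        ENNReal.div_self (by norm_num : (2:ENNReal) ≠ 0) (by norm_num : (2:ENNReal) ≠ ⊤),
        ENNReal.div_self one_ne_zero ENNReal.one_ne_top]
    have h := hg.smul hf (r := 1)
    exact memLp_one_iff_integrable.mp h
  -- every component of every Xₙ is in L²
  have hXL2' : ∀ n (i : Fin d), MemLp (fun ω => X n ω i) 2 P := by
    intro n
    induction n with
    | zero => exact hXL2
    | succ n ih =>
      intro i
      have hXe : (fun ω => X (n + 1) ω i) = fun ω => ∑ j, R n ω i j * X n ω j := by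
        funext ω
        rw [hrec n ω]
        simp [Matrix.mulVec, dotProduct]
      rw [hXe]
      refine memLp_finset_sum _ fun j _ => ?_
      have hind : IndepFun (fun ω => (R n ω i j) ^ 2) (fun ω => (X n ω j) ^ 2) P :=
        (hindep n).comp (((measE i j)).pow_const 2) ((measurable_pi_apply j).pow_const 2)
      have h1 : Integrable (fun ω => (R n ω i j) ^ 2) P :=
        (memLp_two_iff_integrable_sq (measR n i j).aestronglyMeasurable).mp (hRL2 n i j)
      have h2 : Integrable (fun ω => (X n ω j) ^ 2) P :=
        (memLp_two_iff_integrable_sq (measX n j).aestronglyMeasurable).mp (ih j)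
      have h3 : Integrable (fun ω => (R n ω i j) ^ 2 * (X n ω j) ^ 2) P :=
        hind.integrable_mul h1 h2
      refine (memLp_two_iff_integrable_sq
        ((measR n i j).mul (measX n j)).aestronglyMeasurable).mpr ?_
      simpa [mul_pow] using h3
  -- the second-moment vector
  set v : ℕ → (Fin d × Fin d → ℝ) := fun n p => ∫ ω, X n ω p.1 * X n ω p.2 ∂P with hv
  have key : ∀ n, v n = (S ^ n).mulVec (v 0) := by
    intro n
    induction n with
    | zero => simp [Matrix.one_mulVec]
    | succ n ih =>
      have hFint : ∀ (p q : Fin d × Fin d),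
          Integrable (fun ω => R n ω p.1 q.1 * R n ω p.2 q.2) P :=
        fun p q => hmul (hRL2 n _ _) (hRL2 n _ _)
      have hGint : ∀ q : Fin d × Fin d,
          Integrable (fun ω => X n ω q.1 * X n ω q.2) P :=
        fun q => hmul (hXL2' n _) (hXL2' n _)
      have hindq : ∀ (p q : Fin d × Fin d),
          IndepFun (fun ω => R n ω p.1 q.1 * R n ω p.2 q.2)
            (fun ω => X n ω q.1 * X n ω q.2) P :=
        fun p q => (hindep n).comp ((measE p.1 q.1).mul (measE p.2 q.2))
          ((measurable_pi_apply q.1).mul (measurable_pi_apply q.2))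
      have hint : ∀ (p q : Fin d × Fin d),
          Integrable (fun ω =>
            (R n ω p.1 q.1 * R n ω p.2 q.2) * (X n ω q.1 * X n ω q.2)) P :=
        fun p q => (hindq p q).integrable_mul (hFint p q) (hGint q)
      have step : v (n + 1) = S.mulVec (v n) := by
        funext p
        have hexp : (fun ω => X (n + 1) ω p.1 * X (n + 1) ω p.2)
            = fun ω => ∑ q : Fin d × Fin d,
                (R n ω p.1 q.1 * R n ω p.2 q.2) * (X n ω q.1 * X n ω q.2) := by
          funext ω
          rw [hrec n ω]
          simp only [Matrix.mulVec, dotProduct, Finset.sum_mul_sum,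
            Fintype.sum_prod_type]
          exact Finset.sum_congr rfl fun j _ => Finset.sum_congr rfl fun k _ => by ring
        have hcalc : v (n + 1) p
            = ∑ q : Fin d × Fin d, S p q * v n q := by
          show (∫ ω, X (n + 1) ω p.1 * X (n + 1) ω p.2 ∂P) = _
          rw [hexp, integral_finset_sum _ fun q _ => hint p q]
          refine Finset.sum_congr rfl fun q _ => ?_
          have h := (hindq p q).integral_mul_eq_mul_integral (hFint p q).aestronglyMeasurable (hGint q).aestronglyMeasurable
          simpa [Pi.mul_apply, hS n p q] using h
        rw [hcalc]
        simp [Matrix.mulVec, dotProduct]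
      rw [step, ih, Matrix.mulVec_mulVec, ← pow_succ']
  -- rewrite the objective
  have hre : ∀ n, (∫ ω, ∑ i, (X n ω i) ^ 2 ∂P)
      = ∑ i, ((S ^ n).mulVec (v 0)) (i, i) := by
    intro n
    rw [integral_finset_sum _ fun i _ =>
      (memLp_two_iff_integrable_sq (measX n i).aestronglyMeasurable).mp (hXL2' n i)]
    refine Finset.sum_congr rfl fun i _ => ?_
    have h1 : (∫ ω, (X n ω i) ^ 2 ∂P) = v n (i, i) := by
      show _ = ∫ ω, X n ω i * X n ω i ∂P
      congr 1
      funext ω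
      ring
    rw [h1, key n]
  rw [show (fun n => ∫ ω, ∑ i, (X n ω i) ^ 2 ∂P)
      = fun n => ∑ i, ((S ^ n).mulVec (v 0)) (i, i) from funext hre]
  have : Tendsto (fun n => ∑ i : Fin d, ((S ^ n).mulVec (v 0)) (i, i)) atTop
      (nhds (∑ _i : Fin d, 0)) := by
    refine tendsto_finset_sum _ fun i _ => ?_
    simp only [Matrix.mulVec, dotProduct]
    have h0 : Tendsto (fun n => ∑ q : Fin d × Fin d, (S ^ n) (i, i) q * v 0 q) atTop
        (nhds (∑ _q : Fin d × Fin d, 0)) := by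
      refine tendsto_finset_sum _ fun q _ => ?_
      simpa using (aux_entry_tendsto_zero S hρ (i, i) q).mul_const (v 0 q)
    simpa using h0
  simpa using this
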